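/- An element w of a free group F has infinite imprimitivity rank (i.e., there is no finitely generated subgroup of F containing w in which w fails to be primitive) if and only if w is a primitive element of F, that is, w belongs to some free basis of F. -/

import Mathlib

universe u

/-- `w` is a *primitive* element of the subgroup `H`: it is a member of some free basis of `H`. -/
def IsPrimitiveIn {F : Type u} [Group F] (H : Subgroup F) (w : F) : Prop :=
  ∃ (S : Type u) (b : FreeGroupBasis S H) (i : S), (b i : F) = w

/-- `w` is a primitive element of the group `F`: it is a member of some free basis of `F`. -/
def IsPrimitive {F : Type u} [Group F] (w : F) : Prop :=
  ∃ (S : Type u) (b : FreeGroupBasis S F) (i : S), b i = w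

/-- The imprimitivity rank of `w`: the minimal rank of a finitely generated subgroup of `F`
containing `w` in which `w` is not primitive, or `∞` if no such subgroup exists. -/
noncomputable def irank {F : Type u} [Group F] (w : F) : ℕ∞ :=
  sInf {n : ℕ∞ | ∃ m : ℕ, n = (m : ℕ∞) ∧ ∃ H : Subgroup F,
    Nonempty (FreeGroupBasis (Fin m) H) ∧ w ∈ H ∧ ¬ IsPrimitiveIn H w}

lemma FreeGroupBasis.ofLift_apply {G : Type u} [Group G] (X : Type u) (of : X → G)
    (lift : ∀ {H : Type u} [Group H], (X → H) ≃ (G →* H))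
    (lift_of : ∀ {H : Type u} [Group H], ∀ (f : X → H) (a), lift f (of a) = f a) (x : X) :
    (FreeGroupBasis.ofLift X of @lift @lift_of) x = of x := by
  change (FreeGroupBasis.ofLift X of @lift @lift_of).repr.symm (FreeGroup.of x) = of x
  simp [FreeGroupBasis.ofLift]

lemma FreeGroupBasis.ofUniqueLift_apply {G : Type u} [Group G] (X : Type u) (of : X → G)
    (h : ∀ {H : Type u} [Group H] (f : X → H), ∃! F : G →* H, ∀ a, F (of a) = f a) (x : X) :
    (FreeGroupBasis.ofUniqueLift X of @h) x = of x :=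
  FreeGroupBasis.ofLift_apply X of _ _ x

noncomputable section AuxNS

open CategoryTheory CategoryTheory.ActionCategory CategoryTheory.SingleObj Quiver
open IsFreeGroupoid IsFreeGroupoid.SpanningTree SemidirectProduct
open scoped Classical

/-- The action groupoid of `FreeGroup S` acting on `A` is a free groupoid, with generating
arrows labelled by `S` itself (rather than by arbitrarily chosen generators as in
`actionGroupoidIsFree`). -/
def myFreeGroupoid (S : Type u) (A : Type u) [MulAction (FreeGroup S) A] :
    IsFreeGroupoid (ActionCategory (FreeGroup S) A) where
  quiverGenerators :=
    ⟨fun a b => { e : S // FreeGroup.of e • a.back = b.back }⟩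
  of := fun e => ⟨FreeGroup.of e.1, e.2⟩
  unique_lift := by
    intro X _ f
    let f' : S → (A → X) ⋊[mulAutArrow] (FreeGroup S) := fun e =>
      ⟨fun b => @f ⟨(), _⟩ ⟨(), b⟩ ⟨e, smul_inv_smul _ b⟩, FreeGroup.of e⟩
    obtain ⟨F', hF', uF'⟩ : ∃! F : FreeGroup S →* (A → X) ⋊[mulAutArrow] (FreeGroup S),
        ∀ a, F (FreeGroup.of a) = f' a :=
      ⟨FreeGroup.lift f', fun a => FreeGroup.lift_apply_of,
        fun F hF => FreeGroup.ext_hom _ _ fun a => (hF a).trans FreeGroup.lift_apply_of.symm⟩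
    refine ⟨uncurry F' ?_, ?_, ?_⟩
    · suffices SemidirectProduct.rightHom.comp F' = MonoidHom.id _ by
        exact DFunLike.ext_iff.mp this
      refine FreeGroup.ext_hom _ _ fun x => ?_
      rw [MonoidHom.comp_apply, hF']
      rfl
    · rintro ⟨⟨⟩, a : A⟩ ⟨⟨⟩, b⟩ ⟨e, h : FreeGroup.of e • a = b⟩
      change (F' (FreeGroup.of _)).left _ = _
      rw [hF']
      cases inv_smul_eq_iff.mpr h.symm
      rfl
    · intro E hE
      have : curry E = F' := by
        apply uF'
        intro e
        ext
        · convert! hE _ _ _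
          rfl
        · rfl
      apply Functor.hext
      · intro
        apply Unit.ext
      · refine ActionCategory.cases ?_
        intros
        subst this
        rfl

variable {G : Type u} [Groupoid.{u} G] [IsFreeGroupoid G]
  (T : WideSubquiver (Symmetrify <| Generators G)) [Arborescence T]

/-- The root of the tree `T`, as an object of `G`. -/
def myRoot : G :=
  show T from Quiver.root T

lemma treeHom_myRoot : (treeHom T (myRoot T) : End (myRoot T)) = 𝟙 (myRoot T) := treeHom_root T

lemma loopOfHom_myRoot (p : End (myRoot T)) : loopOfHom T p = p := by
  simp only [loopOfHom, treeHom_myRoot]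
  exact (by simp : 𝟙 (myRoot T) ≫ p ≫ inv (𝟙 (myRoot T)) = p)

/-- Given a free groupoid and an arborescence of its generating quiver, the vertex group at the
root has a free basis given by loops coming from generating arrows in the complement of the
tree.  This is the same construction as `IsFreeGroupoid.SpanningTree.endIsFree`, but recording
the basis rather than mere freeness. -/
def myEndBasis :
    FreeGroupBasis ((wideSubquiverEquivSetTotal <| wideSubquiverSymmetrify T)ᶜ : Set _)
      (End (myRoot T)) :=
  FreeGroupBasis.ofUniqueLift ((wideSubquiverEquivSetTotal <| wideSubquiverSymmetrify T)ᶜ : Set _)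
    (fun e => loopOfHom T (of e.val.hom))
    (by
      intro X _ f
      let f' : Labelling (Generators G) X := fun a b e =>
        if h : e ∈ wideSubquiverSymmetrify T a b then 1 else f ⟨⟨a, b, e⟩, h⟩
      rcases unique_lift f' with ⟨F', hF', uF'⟩
      refine ⟨F'.mapEnd _, ?_, ?_⟩
      · suffices ∀ {x y} (q : x ⟶ y), F'.map (loopOfHom T q) = (F'.map q : X) by
          rintro ⟨⟨a, b, e⟩, h⟩
          erw [Functor.mapEnd_apply, this, hF']
          exact dif_neg h
        intros x y q
        suffices ∀ {a} (p : Path (Quiver.root T) a), F'.map (homOfPath T p) = 1 by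
          simp only [this, treeHom, comp_as_mul, inv_as_inv, loopOfHom, inv_one, mul_one,
            one_mul, Functor.map_inv, Functor.map_comp]
          erw [this, this]
          exact (by simp : (1 : X)⁻¹ * F'.map q * 1 = F'.map q)
        intro a p
        induction' p with b c p e ih
        · exact F'.map_id _
        erw [homOfPath.eq_2, F'.map_comp, comp_as_mul, ih, mul_one]
        rcases e with ⟨e | e, eT⟩
        · erw [hF']
          exact dif_pos (Or.inl eT)
        · erw [F'.map_inv, inv_as_inv, inv_eq_one, hF']
          exact dif_pos (Or.inr eT)
      · intro E hE
        ext x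
        suffices h2 : (functorOfMonoidHom T E).map x = F'.map x by
          change E (loopOfHom T x) = _ at h2
          rw [loopOfHom_myRoot] at h2
          exact h2
        congr
        apply uF'
        intro a b e
        change E (loopOfHom T _) = dite _ _ _
        split_ifs with h
        · rw [loopOfHom_eq_id T e h, ← End.one_def]
          exact E.map_one
        · exact hE ⟨⟨a, b, e⟩, h⟩)

lemma myEndBasis_apply (e) :
    myEndBasis T e = loopOfHom T (of e.val.hom) :=
  FreeGroupBasis.ofUniqueLift_apply _ _ _ e

end AuxNS

noncomputable section Core

open CategoryTheory CategoryTheory.ActionCategory Quiver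
open IsFreeGroupoid IsFreeGroupoid.SpanningTree

/-- If a subgroup of a free group contains a generator, then it has a free basis containing that
generator. -/
theorem core_primitive {S : Type u} (H : Subgroup (FreeGroup S)) (x₀ : S)
    (hx : FreeGroup.of x₀ ∈ H) :
    ∃ (T : Type u) (b : FreeGroupBasis T H) (j : T), (b j : FreeGroup S) = FreeGroup.of x₀ := by
  letI inst : IsFreeGroupoid (ActionCategory (FreeGroup S) (FreeGroup S ⧸ H)) :=
    myFreeGroupoid S (FreeGroup S ⧸ H)
  let G := ActionCategory (FreeGroup S) (FreeGroup S ⧸ H)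
  let r : G := objEquiv (FreeGroup S) (FreeGroup S ⧸ H) ((1 : FreeGroup S) : FreeGroup S ⧸ H)
  haveI hrc : RootedConnected (show Symmetrify (Generators G) from r) := @generators_connected G _ (inferInstanceAs (IsConnected (ActionCategory (FreeGroup S) (FreeGroup S ⧸ H)))) _ r
  let T' : WideSubquiver (Symmetrify (Generators G)) :=
    geodesicSubtree (show Symmetrify (Generators G) from r)
  letI : Arborescence T' := geodesicArborescence _
  let b0 := myEndBasis T'
  let em : End (myRoot T') ≃* H := endMulEquivSubgroup H
  let b : FreeGroupBasis _ H := b0.map em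
  have pf : FreeGroup.of x₀ • ActionCategory.back (M := FreeGroup S) (X := FreeGroup S ⧸ H)
      (show G from r) = ActionCategory.back (M := FreeGroup S) (show G from r) := by
    show FreeGroup.of x₀ • ((1 : FreeGroup S) : FreeGroup S ⧸ H) = ((1 : FreeGroup S) : _)
    rw [MulAction.Quotient.smul_mk]
    rw [QuotientGroup.eq]
    simpa using inv_mem hx
  let e₀ : (show Generators G from r) ⟶ (show Generators G from r) := ⟨x₀, pf⟩
  let tot : Total (Generators G) := ⟨show Generators G from r, show Generators G from r, e₀⟩
  have hnot : tot ∈ ((wideSubquiverEquivSetTotal <| wideSubquiverSymmetrify T')ᶜ : Set _) := by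
    intro hmem'
    rcases hmem' with h | h
    · obtain ⟨p, hp⟩ := h
      have h0 : (shortestPath (show Symmetrify (Generators G) from r) tot.right).length ≤ 0 :=
        shortest_path_spec _ Path.nil
      have := congrArg Path.length hp
      erw [Path.length_cons] at this
      omega
    · obtain ⟨p, hp⟩ := h
      have h0 : (shortestPath (show Symmetrify (Generators G) from r) tot.left).length ≤ 0 :=
        shortest_path_spec _ Path.nil
      have := congrArg Path.length hp
      erw [Path.length_cons] at this
      omega
  let j : ((wideSubquiverEquivSetTotal <| wideSubquiverSymmetrify T')ᶜ : Set _) := ⟨tot, hnot⟩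
  refine ⟨_, b, j, ?_⟩
  have h1 : b0 j = IsFreeGroupoid.of e₀ :=
    (myEndBasis_apply T' j).trans (loopOfHom_myRoot T' (IsFreeGroupoid.of e₀))
  have h2 : b j = em (IsFreeGroupoid.of e₀) := by
    show (b0.map em) j = em (IsFreeGroupoid.of e₀)
    exact congrArg em h1
  rw [h2]
  rfl

end Core

theorem isPrimitiveIn_of_isPrimitive {F : Type u} [Group F] {w : F} (hw : IsPrimitive w)
    (H : Subgroup F) (hmem : w ∈ H) : IsPrimitiveIn H w := by
  obtain ⟨S, b, i, rfl⟩ := hw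
  let e : F ≃* FreeGroup S := b.repr
  have hx : FreeGroup.of i ∈ H.map (e : F →* FreeGroup S) :=
    ⟨b i, hmem, b.repr_apply_coe i⟩
  obtain ⟨T, b', j, hj⟩ := core_primitive (H.map (e : F →* FreeGroup S)) i hx
  refine ⟨T, b'.map (e.subgroupMap H).symm, j, ?_⟩
  apply e.injective
  have : ((e.subgroupMap H).symm (b' j) : F) = e.symm (b' j : FreeGroup S) := by
    rw [MulEquiv.subgroupMap_symm_apply]
  rw [FreeGroupBasis.map_apply, this, MulEquiv.apply_symm_apply, hj, b.repr_apply_coe]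

theorem finite_of_fg {F : Type u} [Group F] [h : Group.FG F] {S : Type u}
    (b : FreeGroupBasis S F) : Finite S := by
  classical
  obtain ⟨V, hV⟩ : ∃ V : Finset F, Subgroup.closure (V : Set F) = ⊤ := by
    obtain ⟨V, hV⟩ := h.out
    exact ⟨V, hV⟩
  let S₀ : Finset S := V.biUnion fun g => ((b.repr g).toWord.map Prod.fst).toFinset
  suffices hsub : ∀ s : S, s ∈ S₀ by
    exact Finite.of_injective (fun s : S => (⟨s, hsub s⟩ : (S₀ : Set S)))
      (fun a b h => by simpa using h)
  intro s
  by_contra hs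
  let φ : F →* Multiplicative ℤ :=
    (FreeGroup.lift fun t => if t = s then (Multiplicative.ofAdd 1) else 1).comp
      b.repr.toMonoidHom
  have hker : ∀ g ∈ V, φ g = 1 := by
    intro g hg
    show FreeGroup.lift _ (b.repr g) = 1
    rw [← FreeGroup.mk_toWord (x := b.repr g), FreeGroup.lift_mk]
    apply List.prod_eq_one
    intro x hxmem
    obtain ⟨⟨t, bo⟩, htmem, rfl⟩ := List.mem_map.mp hxmem
    have ht : t ≠ s := by
      intro h'
      exact hs (Finset.mem_biUnion.mpr ⟨g, hg,
        List.mem_toFinset.mpr (List.mem_map.mpr ⟨(t, bo), htmem, h'⟩)⟩)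
    simp [ht]
  have hall : ∀ g : F, φ g = 1 := by
    intro g
    have hle : (⊤ : Subgroup F) ≤ φ.ker := by
      rw [← hV]
      exact (Subgroup.closure_le _).mpr fun g hg => hker g hg
    exact hle (Subgroup.mem_top g)
  have hbs := hall (b s)
  have : φ (b s) = Multiplicative.ofAdd 1 := by
    show FreeGroup.lift _ (b.repr (b s)) = _
    rw [b.repr_apply_coe, FreeGroup.lift_apply_of, if_pos rfl]
  rw [hbs] at this
  exact absurd this.symm (by decide)

/-- An element of a (finitely generated) free group has infinite imprimitivity rank iff it is a
primitive element of the free group. -/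
theorem irank_eq_top_iff {F : Type u} [Group F] [IsFreeGroup F] [Group.FG F] (w : F) :
    irank w = ⊤ ↔ IsPrimitive w := by
  constructor
  · intro h
    by_contra hw
    obtain ⟨S, ⟨b⟩⟩ : ∃ S : Type u, Nonempty (FreeGroupBasis S F) := IsFreeGroup.nonempty_basis
    haveI : Finite S := finite_of_fg b
    haveI : Fintype S := Fintype.ofFinite S
    let e : S ≃ Fin (Fintype.card S) := Fintype.equivFin S
    have hnp : ¬ IsPrimitiveIn (⊤ : Subgroup F) w := by
      rintro ⟨S', b', i, hi⟩
      exact hw ⟨S', b'.map Subgroup.topEquiv, i, by simpa using hi⟩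
    have hmem : ((Fintype.card S : ℕ) : ℕ∞) ∈ {n : ℕ∞ | ∃ m : ℕ, n = (m : ℕ∞) ∧
        ∃ H : Subgroup F, Nonempty (FreeGroupBasis (Fin m) H) ∧ w ∈ H ∧ ¬ IsPrimitiveIn H w} :=
      ⟨Fintype.card S, rfl, ⊤, ⟨(b.reindex e).map Subgroup.topEquiv.symm⟩, trivial, hnp⟩
    have hle : irank w ≤ (Fintype.card S : ℕ∞) := sInf_le hmem
    rw [h] at hle
    simp at hle
  · intro hw
    rw [irank, sInf_eq_top]
    rintro n ⟨m, rfl, H, -, hmem, hnp⟩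
    exact absurd (isPrimitiveIn_of_isPrimitive hw H hmem) hnp
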